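/- For every t > 0, Kendall's tau of the distribution F_t equals −1/2; that is, 4·∫_{0}^{∞}∫_{0}^{∞} F_t(x,y)·f_t(x,y) dx dy − 1 = −1/2. In particular τ is free of the parameter t. -/

import Mathlib

open MeasureTheory Real Filter Set Topology

/-- For every `t > 0`, the bivariate distribution with CDF
`F_t(x,y) = 1 − e^{−x} − (1+y)^{−t} + (1+y)^{−t}·e^{−x(1+y)^t}` and density
`f_t(x,y) = t·x·(1+y)^{t−1}·e^{−x(1+y)^t}` on `(0,∞)²` has Kendall's tau equal to
`−1/2`: `4·∫_{(0,∞)²} F_t(x,y)·f_t(x,y) dx dy − 1 = −1/2`. In particular `τ` is free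
of the parameter `t`. -/
private lemma tendsto_mul_exp_neg (b : ℝ) (hb : 0 < b) :
    Tendsto (fun x : ℝ => x * Real.exp (-(b * x))) atTop (𝓝 0) := by
  have h := (Real.tendsto_pow_mul_exp_neg_atTop_nhds_zero 1).comp
    (Filter.Tendsto.const_mul_atTop hb Filter.tendsto_id)
  have h2 := h.const_mul (1/b)
  rw [mul_zero] at h2
  refine h2.congr fun x => ?_
  simp only [Function.comp, pow_one, id]
  field_simp

private lemma hasDeriv_aux (b : ℝ) (hb : 0 < b) (x : ℝ) :
    HasDerivAt (fun x : ℝ => -((x / b + 1 / b ^ 2) * Real.exp (-(b * x))))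
      (x * Real.exp (-(b * x))) x := by
  have hb' := hb.ne'
  have h1 : HasDerivAt (fun x : ℝ => -(b * x)) (-b) x := by
    simpa using ((hasDerivAt_id x).const_mul b).fun_neg
  have h2 := h1.exp
  have h3 : HasDerivAt (fun x : ℝ => x / b + 1 / b ^ 2) (1 / b) x :=
    ((hasDerivAt_id x).div_const b).add_const _
  have h4 := (h3.fun_mul h2).fun_neg
  refine h4.congr_deriv ?_
  field_simp
  ring

private lemma tendsto_anti (b : ℝ) (hb : 0 < b) :
    Tendsto (fun x : ℝ => -((x / b + 1 / b ^ 2) * Real.exp (-(b * x)))) atTop (𝓝 0) := by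
  have hA := tendsto_mul_exp_neg b hb
  have hB : Tendsto (fun x : ℝ => Real.exp (-(b * x))) atTop (𝓝 0) := by
    exact (Real.tendsto_exp_neg_atTop_nhds_zero.comp
      (Filter.Tendsto.const_mul_atTop hb Filter.tendsto_id)).congr fun x => rfl
  have h := ((hA.const_mul (1/b)).add (hB.const_mul (1/b^2))).neg
  have e : -(1/b * (0:ℝ) + 1/b^2 * 0) = 0 := by ring
  rw [e] at h
  exact h.congr fun x => by ring

private lemma integrableOn_x_exp {b : ℝ} (hb : 0 < b) :
    MeasureTheory.IntegrableOn (fun x : ℝ => x * Real.exp (-(b * x))) (Set.Ioi 0) :=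
  integrableOn_Ioi_deriv_of_nonneg' (fun x _ => hasDeriv_aux b hb x)
    (fun x hx => mul_nonneg (le_of_lt hx) (Real.exp_pos _).le) (tendsto_anti b hb)

private lemma integral_x_exp {b : ℝ} (hb : 0 < b) :
    ∫ x in Set.Ioi (0:ℝ), x * Real.exp (-(b * x)) = 1 / b ^ 2 := by
  rw [integral_Ioi_of_hasDerivAt_of_nonneg' (fun x _ => hasDeriv_aux b hb x)
    (fun x hx => mul_nonneg (le_of_lt hx) (Real.exp_pos _).le) (tendsto_anti b hb)]
  norm_num

private lemma hasDerivAt_base (t y : ℝ) (hy : 0 ≤ y) :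
    HasDerivAt (fun z : ℝ => (1+z)^t) (t * (1+y)^(t-1)) y := by
  have h1 : (0:ℝ) < 1 + y := by linarith
  have h0 : HasDerivAt (fun z : ℝ => 1+z) 1 y := (hasDerivAt_id y).const_add 1
  have := h0.rpow_const (p := t) (Or.inl h1.ne')
  simpa using this

private lemma base_tendsto (t : ℝ) (ht : 0 < t) :
    Tendsto (fun z : ℝ => (1+z)^t) atTop atTop :=
  (tendsto_rpow_atTop ht).comp (tendsto_atTop_add_const_left atTop 1 tendsto_id)

private lemma yint1 {t : ℝ} (ht : 0 < t) :
    MeasureTheory.IntegrableOn (fun y : ℝ => t * (1+y)^(t-1) / ((1+y)^t)^2) (Set.Ioi 0) ∧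
    ∫ y in Set.Ioi (0:ℝ), t * (1+y)^(t-1) / ((1+y)^t)^2 = 1 := by
  have hderiv : ∀ y ∈ Set.Ici (0:ℝ), HasDerivAt (fun z : ℝ => -((1+z)^t)⁻¹)
      (t * (1+y)^(t-1) / ((1+y)^t)^2) y := by
    intro y hy
    have h1 : (0:ℝ) < 1 + y := by have := Set.mem_Ici.mp hy; linarith
    have hne : ((1:ℝ)+y)^t ≠ 0 := (Real.rpow_pos_of_pos h1 t).ne'
    have := ((hasDerivAt_base t y (Set.mem_Ici.mp hy)).fun_inv hne).fun_neg
    refine this.congr_deriv ?_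
    ring
  have hpos : ∀ y ∈ Set.Ioi (0:ℝ), 0 ≤ t * (1+y)^(t-1) / ((1+y)^t)^2 := by
    intro y hy
    have h1 : (0:ℝ) < 1 + y := by have := Set.mem_Ioi.mp hy; linarith
    exact div_nonneg (mul_nonneg ht.le (Real.rpow_nonneg h1.le _)) (sq_nonneg _)
  have htend : Tendsto (fun z : ℝ => -((1+z)^t)⁻¹) atTop (𝓝 0) := by
    have := (base_tendsto t ht).inv_tendsto_atTop
    simpa using this.neg
  refine ⟨integrableOn_Ioi_deriv_of_nonneg' hderiv hpos htend, ?_⟩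
  rw [integral_Ioi_of_hasDerivAt_of_nonneg' hderiv hpos htend]
  norm_num

private lemma yint2 {t : ℝ} (ht : 0 < t) :
    MeasureTheory.IntegrableOn (fun y : ℝ => t * (1+y)^(t-1) / (1+(1+y)^t)^2) (Set.Ioi 0) ∧
    ∫ y in Set.Ioi (0:ℝ), t * (1+y)^(t-1) / (1+(1+y)^t)^2 = 1/2 := by
  have hderiv : ∀ y ∈ Set.Ici (0:ℝ), HasDerivAt (fun z : ℝ => -(1+(1+z)^t)⁻¹)
      (t * (1+y)^(t-1) / (1+(1+y)^t)^2) y := by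
    intro y hy
    have h1 : (0:ℝ) < 1 + y := by have := Set.mem_Ici.mp hy; linarith
    have hne : (1:ℝ)+(1+y)^t ≠ 0 := by positivity
    have := (((hasDerivAt_base t y (Set.mem_Ici.mp hy)).const_add 1).fun_inv hne).fun_neg
    refine this.congr_deriv ?_
    ring
  have hpos : ∀ y ∈ Set.Ioi (0:ℝ), 0 ≤ t * (1+y)^(t-1) / (1+(1+y)^t)^2 := by
    intro y hy
    have h1 : (0:ℝ) < 1 + y := by have := Set.mem_Ioi.mp hy; linarith
    exact div_nonneg (mul_nonneg ht.le (Real.rpow_nonneg h1.le _)) (sq_nonneg _)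
  have htend : Tendsto (fun z : ℝ => -(1+(1+z)^t)⁻¹) atTop (𝓝 0) := by
    have := (tendsto_atTop_add_const_left atTop 1 (base_tendsto t ht)).inv_tendsto_atTop
    simpa using this.neg
  refine ⟨integrableOn_Ioi_deriv_of_nonneg' hderiv hpos htend, ?_⟩
  rw [integral_Ioi_of_hasDerivAt_of_nonneg' hderiv hpos htend]
  norm_num

private lemma yint3 {t : ℝ} (ht : 0 < t) :
    MeasureTheory.IntegrableOn (fun y : ℝ => t * (1+y)^(t-1) / ((1+y)^t)^3) (Set.Ioi 0) ∧
    ∫ y in Set.Ioi (0:ℝ), t * (1+y)^(t-1) / ((1+y)^t)^3 = 1/2 := by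
  have hderiv : ∀ y ∈ Set.Ici (0:ℝ), HasDerivAt (fun z : ℝ => -(1/2 * (((1+z)^t)^2)⁻¹))
      (t * (1+y)^(t-1) / ((1+y)^t)^3) y := by
    intro y hy
    have h1 : (0:ℝ) < 1 + y := by have := Set.mem_Ici.mp hy; linarith
    have hu : (0:ℝ) < (1+y)^t := Real.rpow_pos_of_pos h1 t
    have hne : (((1:ℝ)+y)^t) ^ 2 ≠ 0 := by positivity
    have := ((((hasDerivAt_base t y (Set.mem_Ici.mp hy)).fun_pow 2).fun_inv hne).const_mul (1/2)).fun_neg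
    refine this.congr_deriv ?_
    field_simp
    ring
  have hpos : ∀ y ∈ Set.Ioi (0:ℝ), 0 ≤ t * (1+y)^(t-1) / ((1+y)^t)^3 := by
    intro y hy
    have h1 : (0:ℝ) < 1 + y := by have := Set.mem_Ioi.mp hy; linarith
    have hu : (0:ℝ) < (1+y)^t := Real.rpow_pos_of_pos h1 t
    positivity
  have htend : Tendsto (fun z : ℝ => -(1/2 * (((1+z)^t)^2)⁻¹)) atTop (𝓝 0) := by
    have h2 : Tendsto (fun z : ℝ => ((1+z)^t)^2) atTop atTop :=
      (tendsto_pow_atTop (two_ne_zero)).comp (base_tendsto t ht)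
    have := (h2.inv_tendsto_atTop.const_mul (1/2)).neg
    simpa using this
  refine ⟨integrableOn_Ioi_deriv_of_nonneg' hderiv hpos htend, ?_⟩
  rw [integral_Ioi_of_hasDerivAt_of_nonneg' hderiv hpos htend]
  norm_num

private lemma slice_fun_eq {t y : ℝ} (hy : 0 < y) :
    (fun x : ℝ => (1 - Real.exp (-x) - (1+y)^(-t) + (1+y)^(-t) * Real.exp (-x*(1+y)^t))
        * (t*x*(1+y)^(t-1)*Real.exp (-x*(1+y)^t)))
    = fun x : ℝ => (t*(1+y)^(t-1)) * (x * Real.exp (-((1+y)^t * x)))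
        - (t*(1+y)^(t-1)) * (x * Real.exp (-((1+(1+y)^t) * x)))
        - (t*(1+y)^(t-1)/(1+y)^t) * (x * Real.exp (-((1+y)^t * x)))
        + (t*(1+y)^(t-1)/(1+y)^t) * (x * Real.exp (-(2 * (1+y)^t * x))) := by
  have h1 : (0:ℝ) < 1 + y := by linarith
  have hu : (0:ℝ) < (1+y)^t := Real.rpow_pos_of_pos h1 t
  funext x
  rw [Real.rpow_neg h1.le]
  rw [show -x*(1+y)^t = -((1+y)^t * x) by ring]
  have e1 : Real.exp (-((1+(1+y)^t) * x)) = Real.exp (-x) * Real.exp (-((1+y)^t * x)) := by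
    rw [← Real.exp_add]; ring_nf
  have e2 : Real.exp (-(2 * (1+y)^t * x))
      = Real.exp (-((1+y)^t * x)) * Real.exp (-((1+y)^t * x)) := by
    rw [← Real.exp_add]; ring_nf
  rw [e1, e2]
  field_simp

private lemma slice_integral {t y : ℝ} (ht : 0 < t) (hy : 0 < y) :
    MeasureTheory.IntegrableOn (fun x : ℝ =>
      (1 - Real.exp (-x) - (1+y)^(-t) + (1+y)^(-t) * Real.exp (-x*(1+y)^t))
        * (t*x*(1+y)^(t-1)*Real.exp (-x*(1+y)^t))) (Set.Ioi 0) ∧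
    ∫ x in Set.Ioi (0:ℝ),
      (1 - Real.exp (-x) - (1+y)^(-t) + (1+y)^(-t) * Real.exp (-x*(1+y)^t))
        * (t*x*(1+y)^(t-1)*Real.exp (-x*(1+y)^t))
    = t * (1+y)^(t-1) / ((1+y)^t)^2 - t * (1+y)^(t-1) / (1+(1+y)^t)^2
      - 3/4 * (t * (1+y)^(t-1) / ((1+y)^t)^3) := by
  have h1 : (0:ℝ) < 1 + y := by linarith
  have hu : (0:ℝ) < (1+y)^t := Real.rpow_pos_of_pos h1 t
  have h1u : (0:ℝ) < 1 + (1+y)^t := by linarith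
  have h2u : (0:ℝ) < 2 * (1+y)^t := by linarith
  have i1 := (integrableOn_x_exp hu).const_mul (t*(1+y)^(t-1))
  have i2 := (integrableOn_x_exp h1u).const_mul (t*(1+y)^(t-1))
  have i3 := (integrableOn_x_exp hu).const_mul (t*(1+y)^(t-1)/(1+y)^t)
  have i4 := (integrableOn_x_exp h2u).const_mul (t*(1+y)^(t-1)/(1+y)^t)
  rw [slice_fun_eq hy]
  have i12 : MeasureTheory.Integrable (fun x : ℝ =>
      t*(1+y)^(t-1) * (x * Real.exp (-((1+y)^t * x)))
      - t*(1+y)^(t-1) * (x * Real.exp (-((1+(1+y)^t) * x)))) (volume.restrict (Set.Ioi 0)) :=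
    i1.sub i2
  have i123 : MeasureTheory.Integrable (fun x : ℝ =>
      t*(1+y)^(t-1) * (x * Real.exp (-((1+y)^t * x)))
      - t*(1+y)^(t-1) * (x * Real.exp (-((1+(1+y)^t) * x)))
      - t*(1+y)^(t-1)/(1+y)^t * (x * Real.exp (-((1+y)^t * x)))) (volume.restrict (Set.Ioi 0)) :=
    i12.sub i3
  constructor
  · exact i123.add i4
  · rw [integral_add i123 i4, integral_sub i12 i3,
      integral_sub i1 i2, integral_const_mul, integral_const_mul, integral_const_mul,
      integral_const_mul, integral_x_exp hu, integral_x_exp h1u, integral_x_exp h2u]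
    field_simp
    ring

/-- For every `t > 0`, the bivariate distribution with CDF
`F_t(x,y) = 1 − e^{−x} − (1+y)^{−t} + (1+y)^{−t}·e^{−x(1+y)^t}` and density
`f_t(x,y) = t·x·(1+y)^{t−1}·e^{−x(1+y)^t}` on `(0,∞)²` has Kendall's tau equal to
`−1/2`: `4·∫_{(0,∞)²} F_t(x,y)·f_t(x,y) dx dy − 1 = −1/2`. In particular `τ` is free
of the parameter `t`. -/

theorem kendall_tau_exponential_pareto_family
    (t : ℝ) (ht : 0 < t)
    (F f : ℝ → ℝ → ℝ)
    (hF : ∀ x y, F x y = 1 - Real.exp (-x) - (1 + y) ^ (-t)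
      + (1 + y) ^ (-t) * Real.exp (-x * (1 + y) ^ t))
    (hf : ∀ x y, f x y = t * x * (1 + y) ^ (t - 1) * Real.exp (-x * (1 + y) ^ t)) :
    4 * (∫ p in Set.Ioi (0 : ℝ) ×ˢ Set.Ioi (0 : ℝ), F p.1 p.2 * f p.1 p.2) - 1
      = -(1 / 2) := by
  -- pointwise rewriting of the slice
  have hfe : ∀ y : ℝ, (fun x : ℝ => F x y * f x y)
      = fun x : ℝ => (1 - Real.exp (-x) - (1+y)^(-t) + (1+y)^(-t) * Real.exp (-x*(1+y)^t))
        * (t*x*(1+y)^(t-1)*Real.exp (-x*(1+y)^t)) := by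
    intro y; funext x; rw [hF, hf]
  have hsliceInt : ∀ y ∈ Set.Ioi (0:ℝ),
      MeasureTheory.IntegrableOn (fun x : ℝ => F x y * f x y) (Set.Ioi 0) := by
    intro y hy
    rw [IntegrableOn, hfe y]
    exact (slice_integral ht hy).1
  have hsliceVal : ∀ y ∈ Set.Ioi (0:ℝ),
      ∫ x in Set.Ioi (0:ℝ), F x y * f x y
        = t * (1+y)^(t-1) / ((1+y)^t)^2 - t * (1+y)^(t-1) / (1+(1+y)^t)^2
          - 3/4 * (t * (1+y)^(t-1) / ((1+y)^t)^3) := by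
    intro y hy
    rw [show (∫ x in Set.Ioi (0:ℝ), F x y * f x y)
        = ∫ x in Set.Ioi (0:ℝ), (fun x : ℝ => F x y * f x y) x from rfl, hfe y]
    exact (slice_integral ht hy).2
  -- measurability
  have hmeas : AEStronglyMeasurable (fun p : ℝ × ℝ => F p.1 p.2 * f p.1 p.2)
      ((volume.restrict (Set.Ioi 0)).prod (volume.restrict (Set.Ioi 0))) := by
    have hm : Measurable (fun p : ℝ × ℝ => F p.1 p.2 * f p.1 p.2) := by
      simp only [hF, hf]
      fun_prop
    exact hm.aestronglyMeasurable
  -- bound on the norm-integral of slices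
  have hIbound : ∀ y ∈ Set.Ioi (0:ℝ),
      (∫ x in Set.Ioi (0:ℝ), ‖F x y * f x y‖) ≤ t * (1+y)^(t-1) / ((1+y)^t)^2 := by
    intro y hy
    have hy0 : (0:ℝ) < y := hy
    have h1 : (0:ℝ) < 1 + y := by linarith
    have hu : (0:ℝ) < (1+y)^t := Real.rpow_pos_of_pos h1 t
    have hfy : (fun x : ℝ => f x y)
        = fun x : ℝ => (t*(1+y)^(t-1)) * (x * Real.exp (-((1+y)^t * x))) := by
      funext x
      rw [hf, show -x*(1+y)^t = -((1+y)^t*x) by ring]; ring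
    have hfyInt : MeasureTheory.IntegrableOn (fun x : ℝ => f x y) (Set.Ioi 0) := by
      rw [IntegrableOn, hfy]
      exact (integrableOn_x_exp hu).const_mul _
    have hfyVal : ∫ x in Set.Ioi (0:ℝ), f x y = t*(1+y)^(t-1) * (1/((1+y)^t)^2) := by
      rw [show (∫ x in Set.Ioi (0:ℝ), f x y)
          = ∫ x in Set.Ioi (0:ℝ), (fun x : ℝ => f x y) x from rfl, hfy,
        integral_const_mul, integral_x_exp hu]
    have hpt : ∀ x ∈ Set.Ioi (0:ℝ), ‖F x y * f x y‖ ≤ f x y := by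
      intro x hx
      have hx0 : (0:ℝ) < x := hx
      have hfnn : 0 ≤ f x y := by
        rw [hf]
        exact mul_nonneg (mul_nonneg (mul_nonneg ht.le hx0.le)
          (Real.rpow_nonneg h1.le _)) (Real.exp_pos _).le
      have hFabs : |F x y| ≤ 1 := by
        rw [hF]
        have hv1 : (1+y)^(-t) ≤ 1 :=
          Real.rpow_le_one_of_one_le_of_nonpos (by linarith) (by linarith)
        have hv0 : (0:ℝ) < (1+y)^(-t) := Real.rpow_pos_of_pos h1 _
        have hE1 : Real.exp (-x) ≤ 1 := Real.exp_le_one_iff.mpr (by linarith)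
        have hE10 : (0:ℝ) < Real.exp (-x) := Real.exp_pos _
        have hE2 : Real.exp (-x*(1+y)^t) ≤ 1 := Real.exp_le_one_iff.mpr (by nlinarith)
        have hE20 : (0:ℝ) < Real.exp (-x*(1+y)^t) := Real.exp_pos _
        rw [abs_le]
        constructor <;> nlinarith
      calc ‖F x y * f x y‖ = |F x y| * |f x y| := by rw [Real.norm_eq_abs, abs_mul]
        _ ≤ 1 * f x y := by
            rw [abs_of_nonneg hfnn]
            exact mul_le_mul_of_nonneg_right hFabs hfnn
        _ = f x y := one_mul _
    calc (∫ x in Set.Ioi (0:ℝ), ‖F x y * f x y‖) ≤ ∫ x in Set.Ioi (0:ℝ), f x y :=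
          setIntegral_mono_on ((hsliceInt y hy).norm) hfyInt measurableSet_Ioi hpt
      _ = t * (1+y)^(t-1) / ((1+y)^t)^2 := by rw [hfyVal]; ring
  -- product integrability
  have hprodInt : Integrable (fun p : ℝ × ℝ => F p.1 p.2 * f p.1 p.2)
      ((volume.restrict (Set.Ioi 0)).prod (volume.restrict (Set.Ioi 0))) := by
    rw [integrable_prod_iff' hmeas]
    constructor
    · filter_upwards [ae_restrict_mem measurableSet_Ioi] with y hy
      exact hsliceInt y hy
    · have hmeasI : AEStronglyMeasurable
          (fun y : ℝ => ∫ x, ‖F x y * f x y‖ ∂(volume.restrict (Set.Ioi 0)))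
          (volume.restrict (Set.Ioi 0)) :=
        (hmeas.norm.prod_swap).integral_prod_right'
      apply Integrable.mono (yint1 ht).1 hmeasI
      filter_upwards [ae_restrict_mem measurableSet_Ioi] with y hy
      have h1 : (0:ℝ) < 1 + y := by have : (0:ℝ) < y := hy; linarith
      rw [Real.norm_eq_abs, Real.norm_eq_abs,
        abs_of_nonneg (integral_nonneg fun x => norm_nonneg _),
        abs_of_nonneg (div_nonneg (mul_nonneg ht.le (Real.rpow_nonneg h1.le _)) (sq_nonneg _))]
      exact hIbound y hy
  -- Fubini
  have hrw : (∫ p in Set.Ioi (0:ℝ) ×ˢ Set.Ioi (0:ℝ), F p.1 p.2 * f p.1 p.2)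
      = ∫ y in Set.Ioi (0:ℝ), ∫ x in Set.Ioi (0:ℝ), F x y * f x y := by
    rw [show (volume : Measure (ℝ × ℝ)).restrict (Set.Ioi 0 ×ˢ Set.Ioi 0)
        = (volume.restrict (Set.Ioi 0)).prod (volume.restrict (Set.Ioi 0)) from by
      rw [Measure.volume_eq_prod, Measure.prod_restrict]]
    exact integral_prod_symm _ hprodInt
  have hcongr : (∫ y in Set.Ioi (0:ℝ), ∫ x in Set.Ioi (0:ℝ), F x y * f x y)
      = ∫ y in Set.Ioi (0:ℝ),
          (t * (1+y)^(t-1) / ((1+y)^t)^2 - t * (1+y)^(t-1) / (1+(1+y)^t)^2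
            - 3/4 * (t * (1+y)^(t-1) / ((1+y)^t)^3)) :=
    setIntegral_congr_fun measurableSet_Ioi fun y hy => hsliceVal y hy
  have hAB : MeasureTheory.Integrable (fun y : ℝ =>
      t * (1+y)^(t-1) / ((1+y)^t)^2 - t * (1+y)^(t-1) / (1+(1+y)^t)^2)
      (volume.restrict (Set.Ioi 0)) := (yint1 ht).1.sub (yint2 ht).1
  have hC : MeasureTheory.Integrable (fun y : ℝ =>
      3/4 * (t * (1+y)^(t-1) / ((1+y)^t)^3)) (volume.restrict (Set.Ioi 0)) :=
    (yint3 ht).1.const_mul _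
  have hval : (∫ y in Set.Ioi (0:ℝ),
      (t * (1+y)^(t-1) / ((1+y)^t)^2 - t * (1+y)^(t-1) / (1+(1+y)^t)^2
        - 3/4 * (t * (1+y)^(t-1) / ((1+y)^t)^3)))
      = 1 - 1/2 - 3/4 * (1/2) := by
    rw [integral_sub hAB hC, integral_sub (yint1 ht).1 (yint2 ht).1,
      integral_const_mul, (yint1 ht).2, (yint2 ht).2, (yint3 ht).2]
  rw [hrw, hcongr, hval]
  norm_num
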